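/- Properties of the segment endpoints T_n (Lemma 'T-minus'). Under the learning-rate framework of the context: (i) T_{n+1} − T_n ≥ T for every n; (ii) lim_{n→∞} (T_{n+1} − T_n) = T; and (iii) for every τ > 0 and all real numbers t₁, t₂ with −τ ≤ t₁ ≤ t₂ ≤ τ, lim_{n→∞} ∑_{i=m(t(n)+t₁)}^{m(t(n)+t₂)−1} α(i) = t₂ − t₁. -/
import Mathlib


open Filter

theorem segment_endpoint_properties
    (α : ℕ → ℝ)
    (hα_pos : ∀ n, 0 < α n)
    (hα_anti : ∀ n, α (n + 1) ≤ α n)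
    (hα_div : Tendsto (fun n => ∑ i ∈ Finset.range n, α i) atTop atTop)
    (hα_to0 : Tendsto α atTop (nhds 0))
    (t : ℕ → ℝ) (ht : ∀ n, t n = ∑ i ∈ Finset.range n, α i)
    (m : ℝ → ℕ)
    (hm_le : ∀ s : ℝ, 0 ≤ s → t (m s) ≤ s)
    (hm_max : ∀ s : ℝ, 0 ≤ s → ∀ i : ℕ, t i ≤ s → i ≤ m s)
    (hm_neg : ∀ s : ℝ, s < 0 → m s = 0)
    (T : ℝ) (hT : 0 < T)
    (Tseq : ℕ → ℝ) (hTseq0 : Tseq 0 = 0)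
    (hTseq : ∀ n, Tseq (n + 1) = t (m (Tseq n + T) + 1))
 :
    (∀ n : ℕ, T ≤ Tseq (n + 1) - Tseq n) ∧
    Tendsto (fun n => Tseq (n + 1) - Tseq n) atTop (nhds T) ∧
    (∀ τ : ℝ, 0 < τ → ∀ t₁ t₂ : ℝ, -τ ≤ t₁ → t₁ ≤ t₂ → t₂ ≤ τ →
      Tendsto (fun n => ∑ i ∈ Finset.Ico (m (t n + t₁)) (m (t n + t₂)), α i)
        atTop (nhds (t₂ - t₁))) := by
  have ht_succ : ∀ n, t (n + 1) = t n + α n := by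
    intro n; rw [ht, ht, Finset.sum_range_succ]
  have ht_nonneg : ∀ n, 0 ≤ t n := by
    intro n; rw [ht]; exact Finset.sum_nonneg fun i _ => (hα_pos i).le
  have key : ∀ s : ℝ, 0 ≤ s → s < t (m s) + α (m s) := by
    intro s hs
    by_contra h
    push_neg at h
    have := hm_max s hs (m s + 1) (by rw [ht_succ]; exact h)
    omega
  have hm_mono : ∀ s1 s2 : ℝ, s1 ≤ s2 → m s1 ≤ m s2 := by
    intro s1 s2 h12
    rcases lt_or_ge s1 0 with h | h
    · rw [hm_neg s1 h]; exact Nat.zero_le _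
    · exact hm_max s2 (h.trans h12) (m s1) ((hm_le s1 h).trans h12)
  have ht_tendsto : Tendsto t atTop atTop :=
    hα_div.congr fun n => (ht n).symm
  have hm_tendsto : Tendsto m atTop atTop := by
    rw [tendsto_atTop_atTop]
    intro N
    exact ⟨t N, fun s hs => hm_max s ((ht_nonneg N).trans hs) N hs⟩
  have hTseq_nonneg : ∀ n, 0 ≤ Tseq n := by
    intro n
    cases n with
    | zero => rw [hTseq0]
    | succ k => rw [hTseq k]; exact ht_nonneg _
  have part1 : ∀ n : ℕ, T ≤ Tseq (n + 1) - Tseq n := by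
    intro n
    have hs : (0:ℝ) ≤ Tseq n + T := add_nonneg (hTseq_nonneg n) hT.le
    have hk := key _ hs
    rw [hTseq n, ht_succ]
    linarith
  have hgrow : ∀ n : ℕ, (n : ℝ) * T ≤ Tseq n := by
    intro n
    induction n with
    | zero => simp [hTseq0]
    | succ k ih =>
      have := part1 k
      push_cast
      linarith
  have hTseq_top : Tendsto Tseq atTop atTop := by
    apply tendsto_atTop_mono hgrow
    exact Tendsto.atTop_mul_const hT tendsto_natCast_atTop_atTop
  have hα0' : Tendsto (fun n => α (m (Tseq n + T))) atTop (nhds 0) :=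
    hα_to0.comp (hm_tendsto.comp (tendsto_atTop_add_const_right _ T hTseq_top))
  have part2 : Tendsto (fun n => Tseq (n + 1) - Tseq n) atTop (nhds T) := by
    refine tendsto_of_tendsto_of_tendsto_of_le_of_le (g := fun _ => T)
      (h := fun n => T + α (m (Tseq n + T))) tendsto_const_nhds ?_ part1 ?_
    · simpa using (tendsto_const_nhds (x := T)).add hα0'
    · intro n
      have hs : (0:ℝ) ≤ Tseq n + T := add_nonneg (hTseq_nonneg n) hT.le
      have h1 := hm_le _ hs
      show Tseq (n + 1) - Tseq n ≤ T + α (m (Tseq n + T))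
      rw [hTseq n, ht_succ]
      linarith
  refine ⟨part1, part2, ?_⟩
  intro τ hτ t₁ t₂ h1τ h12 h2τ
  have hf1 : Tendsto (fun n => α (m (t n + t₁))) atTop (nhds 0) :=
    hα_to0.comp (hm_tendsto.comp (tendsto_atTop_add_const_right _ t₁ ht_tendsto))
  have hf2 : Tendsto (fun n => α (m (t n + t₂))) atTop (nhds 0) :=
    hα_to0.comp (hm_tendsto.comp (tendsto_atTop_add_const_right _ t₂ ht_tendsto))
  have hev : ∀ᶠ n in atTop, τ ≤ t n := ht_tendsto.eventually_ge_atTop τ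
  refine tendsto_of_tendsto_of_tendsto_of_le_of_le'
    (g := fun n => t₂ - t₁ - α (m (t n + t₂)))
    (h := fun n => t₂ - t₁ + α (m (t n + t₁))) ?_ ?_ ?_ ?_
  · simpa using (tendsto_const_nhds (x := t₂ - t₁)).sub hf2
  · simpa using (tendsto_const_nhds (x := t₂ - t₁)).add hf1
  · filter_upwards [hev] with n hn
    have ha : (0:ℝ) ≤ t n + t₁ := by linarith
    have hb : (0:ℝ) ≤ t n + t₂ := by linarith
    have hab : m (t n + t₁) ≤ m (t n + t₂) := hm_mono _ _ (by linarith)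
    have hsum : ∑ i ∈ Finset.Ico (m (t n + t₁)) (m (t n + t₂)), α i
        = t (m (t n + t₂)) - t (m (t n + t₁)) := by
      rw [Finset.sum_Ico_eq_sub _ hab, ht (m (t n + t₂)), ht (m (t n + t₁))]
    have l1 := key _ hb
    have l2 := hm_le _ ha
    rw [hsum]
    linarith
  · filter_upwards [hev] with n hn
    have ha : (0:ℝ) ≤ t n + t₁ := by linarith
    have hb : (0:ℝ) ≤ t n + t₂ := by linarith
    have hab : m (t n + t₁) ≤ m (t n + t₂) := hm_mono _ _ (by linarith)
    have hsum : ∑ i ∈ Finset.Ico (m (t n + t₁)) (m (t n + t₂)), α i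
        = t (m (t n + t₂)) - t (m (t n + t₁)) := by
      rw [Finset.sum_Ico_eq_sub _ hab, ht (m (t n + t₂)), ht (m (t n + t₁))]
    have l1 := hm_le _ hb
    have l2 := key _ ha
    rw [hsum]
    linarith
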